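/- For a triangle functor F : A → B between triangulated categories, if F satisfies condition (WSM) then F is objective: every morphism w with F(w) = 0 factors through an object K with F(K) ≅ 0. -/

import Mathlib

open CategoryTheory CategoryTheory.Limits CategoryTheory.Pretriangulated

universe v₁ v₂ u₁ u₂

variable {A : Type u₁} {B : Type u₂} [Category.{v₁} A] [Category.{v₂} B]
  [Preadditive A] [Preadditive B] [HasZeroObject A] [HasZeroObject B]
  [HasShift A ℤ] [HasShift B ℤ]
  [∀ n : ℤ, (shiftFunctor A n).Additive] [∀ n : ℤ, (shiftFunctor B n).Additive]
  [Pretriangulated A] [Pretriangulated B] [IsTriangulated A] [IsTriangulated B]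


/-- If a triangle functor satisfies (WSM), then it is objective. -/
theorem stmt8 (F : A ⥤ B) [F.CommShift ℤ] [F.IsTriangulated]
    (hWSM : ∀ (X Y : A) (u : X ⟶ Y), IsSplitMono (F.map u) →
      ∃ (X' : A) (u' : Y ⟶ X'), IsIso (F.map (u ≫ u'))) :
    ∀ (Z W : A) (w : Z ⟶ W), F.map w = 0 →
      ∃ (K : A) (g : Z ⟶ K) (h : K ⟶ W), IsZero (F.obj K) ∧ w = g ≫ h := by
  intro Z W w hw
  -- Set X := W⟦-1⟧ and identify X⟦1⟧ with W.
  set X : A := W⟦(-1 : ℤ)⟧ with hX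
  let e : X⟦(1 : ℤ)⟧ ≅ W := (shiftFunctorCompIsoId A (-1 : ℤ) (1 : ℤ) (by omega)).app W
  let w' : Z ⟶ X⟦(1 : ℤ)⟧ := w ≫ e.inv
  have hw' : F.map w' = 0 := by simp [w', hw]
  -- Complete w' to a distinguished triangle X ⟶ Y ⟶ Z ⟶ X⟦1⟧.
  obtain ⟨Y, u, v, hT⟩ := distinguished_cocone_triangle₂ w'
  -- F maps it to a distinguished triangle.
  have hFT := F.map_distinguished _ hT
  -- Its mor₃ is zero.
  have hmor₃ : (F.mapTriangle.obj (Triangle.mk u v w')).mor₃ = 0 := by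
    dsimp [Functor.mapTriangle]
    change F.map w' ≫ _ = 0
    rw [hw']
    exact zero_comp
  -- Therefore F.map u is a split mono.
  have hsm : IsSplitMono (F.map u) := by
    obtain ⟨iso, h₁, h₂⟩ := exists_iso_binaryBiproduct_of_distTriang _ hFT hmor₃
    dsimp [Functor.mapTriangle] at h₁
    exact ⟨⟨⟨iso.hom ≫ biprod.fst, by
      have h := congrArg (· ≫ biprod.fst) h₁
      exact (Category.assoc (F.map u) iso.hom biprod.fst).symm.trans (h.trans biprod.inl_fst)⟩⟩⟩
  -- Apply (WSM).
  obtain ⟨X', u', hiso⟩ := hWSM X Y u hsm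
  -- Complete u ≫ u' to a distinguished triangle X ⟶ X' ⟶ K ⟶ X⟦1⟧.
  obtain ⟨K, p, q, hT'⟩ := distinguished_cocone_triangle (u ≫ u')
  -- F(K) is zero, since F(u ≫ u') is an isomorphism.
  have hFT' := F.map_distinguished _ hT'
  have hK : IsZero (F.obj K) := by
    have := Triangle.isZero₃_of_isIso₁ _ hFT' (by dsimp [Functor.mapTriangle]; exact hiso)
    exact this
  -- Morphism of triangles giving the factorization.
  obtain ⟨g, hg₁, hg₂⟩ := complete_distinguished_triangle_morphism
    (Triangle.mk u v w') (Triangle.mk (u ≫ u') p q) hT hT' (𝟙 X) u' (Category.id_comp _).symm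
  refine ⟨K, g, q ≫ e.hom, hK, ?_⟩
  have : w' = g ≫ q := by
    exact (Category.comp_id w').symm.trans ((congrArg (w' ≫ ·) ((shiftFunctor A (1 : ℤ)).map_id X).symm).trans hg₂)
  refine Eq.trans ?_ ((congrArg (· ≫ e.hom) this).trans (Category.assoc g q e.hom))
  simp [w']
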